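/- Let n ≥ 3, let K ⊆ ℝⁿ be a proper subdual cone, let A ∈ ℝ^{n×n} be symmetric, and let {v¹, …, vⁿ} be an orthonormal system of eigenvectors of A with A vⁱ = λᵢ vⁱ and λ₁ < λ₂ ≤ ⋯ ≤ λₙ. Set θᵢ = (λᵢ − λ₂)/(λ₂ − λ₁) for i = 2, …, n and L_{λ₂} = {x ∈ ℝⁿ : ⟨v¹, x⟩ ≥ √(θ₂⟨v², x⟩² + ⋯ + θₙ⟨vⁿ, x⟩²)}. Suppose λ₂ ≤ (λ₁ + λ₃)/2. If K ∩ (−L_{λ₂}) = {0} or K ∩ L_{λ₂} = {0}, then the sublevel set [φ_A ≤ c] = {x ∈ int(K) : ⟨Ax, x⟩ ≤ c‖x‖²} is convex for every c ∉ (λ₂, λₙ). -/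

import Mathlib

open scoped RealInnerProductSpace

/-- The quadratic form `x ↦ ⟨A x, x⟩` associated with a matrix `A`. -/
noncomputable def quadForm {n : ℕ} (A : Matrix (Fin n) (Fin n) ℝ)
    (x : EuclideanSpace ℝ (Fin n)) : ℝ :=
  ⟪Matrix.toEuclideanLin A x, x⟫

/-- `K` is a cone: closed under multiplication by positive scalars. -/
def IsCone {n : ℕ} (K : Set (EuclideanSpace ℝ (Fin n))) : Prop :=
  ∀ ⦃t : ℝ⦄, 0 < t → ∀ ⦃x⦄, x ∈ K → t • x ∈ K

/-- A proper cone: a pointed closed convex cone with nonempty interior. -/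
def IsProperCone {n : ℕ} (K : Set (EuclideanSpace ℝ (Fin n))) : Prop :=
  IsCone K ∧ Convex ℝ K ∧ IsClosed K ∧ K ∩ (-K) ⊆ {0} ∧ (interior K).Nonempty

/-- The dual cone `K* = {u : ⟨u, y⟩ ≥ 0 for all y ∈ K}`. -/
def dualCone {n : ℕ} (K : Set (EuclideanSpace ℝ (Fin n))) : Set (EuclideanSpace ℝ (Fin n)) :=
  {u | ∀ y ∈ K, 0 ≤ ⟪u, y⟫}

/-- The sublevel set `[φ_A ≤ c] = {x ∈ int K : ⟨A x, x⟩ ≤ c ‖x‖²}`. -/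
noncomputable def sublevel {n : ℕ} (A : Matrix (Fin n) (Fin n) ℝ)
    (K : Set (EuclideanSpace ℝ (Fin n))) (c : ℝ) : Set (EuclideanSpace ℝ (Fin n)) :=
  {x ∈ interior K | quadForm A x ≤ c * ‖x‖ ^ 2}

/-- The elliptic cone `L = {x : √(∑_{i≥2} θᵢ ⟨vⁱ, x⟩²) ≤ ⟨v¹, x⟩}`. -/
noncomputable def ellipCone {n : ℕ} [NeZero n]
    (v : Fin n → EuclideanSpace ℝ (Fin n)) (θ : Fin n → ℝ) :
    Set (EuclideanSpace ℝ (Fin n)) :=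
  {x | Real.sqrt (∑ i ∈ Finset.univ.erase 0, θ i * ⟪v i, x⟫ ^ 2) ≤ ⟪v 0, x⟫}

/-- Sets of the form `{x : ∑ᵢ aᵢ ⟨vᵢ, x⟩² ≤ ⟨w, x⟩², 0 ≤ ⟨w, x⟩}` with `aᵢ ≥ 0` are convex. -/
lemma convex_aux {n : ℕ} (v : Fin n → EuclideanSpace ℝ (Fin n))
    (s : Finset (Fin n)) (a : Fin n → ℝ) (ha : ∀ i ∈ s, 0 ≤ a i)
    (w : EuclideanSpace ℝ (Fin n)) :
    Convex ℝ {x : EuclideanSpace ℝ (Fin n) |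
      ∑ i ∈ s, a i * ⟪v i, x⟫ ^ 2 ≤ ⟪w, x⟫ ^ 2 ∧ 0 ≤ ⟪w, x⟫} := by
  classical
  set g : EuclideanSpace ℝ (Fin n) → EuclideanSpace ℝ (Fin n) := fun x =>
    (WithLp.equiv 2 (Fin n → ℝ)).symm
      (fun i => if i ∈ s then Real.sqrt (a i) * ⟪v i, x⟫ else 0) with hg
  have hg_sq : ∀ x, ‖g x‖ ^ 2 = ∑ i ∈ s, a i * ⟪v i, x⟫ ^ 2 := by
    intro x
    rw [EuclideanSpace.norm_eq, Real.sq_sqrt (by positivity)]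
    rw [← Finset.sum_subset (Finset.subset_univ s)]
    · refine Finset.sum_congr rfl fun i hi => ?_
      simp only [hg, WithLp.equiv_symm_apply, WithLp.ofLp_toLp, if_pos hi, Real.norm_eq_abs, sq_abs]
      rw [mul_pow, Real.sq_sqrt (ha i hi)]
    · intro i _ hi
      simp [hg, WithLp.equiv_symm_apply, WithLp.ofLp_toLp, if_neg hi]
  have key : ∀ x, ∑ i ∈ s, a i * ⟪v i, x⟫ ^ 2 ≤ ⟪w, x⟫ ^ 2 → 0 ≤ ⟪w, x⟫ →
      ‖g x‖ ≤ ⟪w, x⟫ := by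
    intro x h1 h2
    have h3 : ‖g x‖ ^ 2 ≤ ⟪w, x⟫ ^ 2 := by rw [hg_sq]; exact h1
    nlinarith [norm_nonneg (g x)]
  intro x hx y hy p q hp hq hpq
  obtain ⟨hx1, hx2⟩ := hx
  obtain ⟨hy1, hy2⟩ := hy
  have hgx := key x hx1 hx2
  have hgy := key y hy1 hy2
  have hwz : ⟪w, p • x + q • y⟫ = p * ⟪w, x⟫ + q * ⟪w, y⟫ := by
    rw [inner_add_right, real_inner_smul_right, real_inner_smul_right]
  have hsign : (0:ℝ) ≤ ⟪w, p • x + q • y⟫ := by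
    rw [hwz]
    exact add_nonneg (mul_nonneg hp hx2) (mul_nonneg hq hy2)
  have hg_lin : g (p • x + q • y) = p • g x + q • g y := by
    ext i
    simp only [hg, WithLp.equiv_symm_apply, WithLp.ofLp_toLp, PiLp.add_apply, PiLp.smul_apply,
      inner_add_right, real_inner_smul_right, smul_eq_mul]
    split_ifs <;> ring
  have h1 : ‖g (p • x + q • y)‖ ≤ ⟪w, p • x + q • y⟫ := by
    rw [hg_lin, hwz]
    calc ‖p • g x + q • g y‖ ≤ ‖p • g x‖ + ‖q • g y‖ := norm_add_le _ _
      _ = p * ‖g x‖ + q * ‖g y‖ := by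
          rw [norm_smul, norm_smul, Real.norm_eq_abs, Real.norm_eq_abs,
            abs_of_nonneg hp, abs_of_nonneg hq]
      _ ≤ p * ⟪w, x⟫ + q * ⟪w, y⟫ :=
          add_le_add (mul_le_mul_of_nonneg_left hgx hp) (mul_le_mul_of_nonneg_left hgy hq)
  refine ⟨?_, hsign⟩
  rw [← hg_sq]
  nlinarith [norm_nonneg (g (p • x + q • y))]

/-- Corollary 3 of the paper: if `λ₂ ≤ (λ₁ + λ₃)/2` and `K ∩ (-L_{λ₂}) = {0}` or
`K ∩ L_{λ₂} = {0}`, then `[φ_A ≤ c]` is convex for all `c ∉ (λ₂, λₙ)`. -/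
theorem stmt7 (n : ℕ) [NeZero n] (hn : 3 ≤ n)
    (K : Set (EuclideanSpace ℝ (Fin n))) (hK : IsProperCone K) (hsub : K ⊆ dualCone K)
    (A : Matrix (Fin n) (Fin n) ℝ) (hA : A.IsSymm)
    (v : Fin n → EuclideanSpace ℝ (Fin n)) (hv : Orthonormal ℝ v)
    (lam : Fin n → ℝ) (heig : ∀ i, Matrix.toEuclideanLin A (v i) = lam i • v i)
    (hmono : Monotone lam) (h12 : lam 0 < lam 1)
    (h123 : lam 1 ≤ (lam 0 + lam 2) / 2) :
    let L := ellipCone v (fun i => (lam i - lam 1) / (lam 1 - lam 0))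
    (K ∩ -L = {0} ∨ K ∩ L = {0}) →
      ∀ c : ℝ, c ∉ Set.Ioo (lam 1) (lam ⟨n - 1, by omega⟩) → Convex ℝ (sublevel A K c) := by
  intro L hbranch c hc
  haveI : Nonempty (Fin n) := ⟨0⟩
  -- basic spectral setup
  have hherm : A.IsHermitian := by
    rw [Matrix.IsHermitian, Matrix.conjTranspose]
    ext i j
    simpa [star_trivial, conj_trivial] using congrFun (congrFun hA.eq i) j
  have hsymm : (Matrix.toEuclideanLin A).IsSymmetric :=
    Matrix.isHermitian_iff_isSymmetric.mp hherm
  have card : Fintype.card (Fin n) = Module.finrank ℝ (EuclideanSpace ℝ (Fin n)) := by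
    simp [finrank_euclideanSpace]
  let b0 := basisOfOrthonormalOfCardEqFinrank hv card
  have hb0 : ⇑b0 = v := coe_basisOfOrthonormalOfCardEqFinrank hv card
  let b : OrthonormalBasis (Fin n) ℝ (EuclideanSpace ℝ (Fin n)) :=
    b0.toOrthonormalBasis (by rwa [hb0])
  have hb : ⇑b = v := by rw [Module.Basis.coe_toOrthonormalBasis, hb0]
  have hquad : ∀ x : EuclideanSpace ℝ (Fin n),
      quadForm A x = ∑ i, lam i * ⟪v i, x⟫ ^ 2 := by
    intro x
    rw [quadForm, ← b.sum_inner_mul_inner (Matrix.toEuclideanLin A x) x]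
    refine Finset.sum_congr rfl fun i _ => ?_
    rw [hb, hsymm x (v i), heig i, real_inner_smul_right, real_inner_comm x (v i)]
    ring
  have hnorm : ∀ x : EuclideanSpace ℝ (Fin n), ‖x‖ ^ 2 = ∑ i, ⟪v i, x⟫ ^ 2 := by
    intro x
    rw [← real_inner_self_eq_norm_sq, ← b.sum_inner_mul_inner x x]
    refine Finset.sum_congr rfl fun i _ => ?_
    rw [hb, real_inner_comm x (v i)]
    ring
  have hdiff : ∀ x : EuclideanSpace ℝ (Fin n),
      quadForm A x - c * ‖x‖ ^ 2 = ∑ i, (lam i - c) * ⟪v i, x⟫ ^ 2 := by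
    intro x
    rw [hquad x, hnorm x, Finset.mul_sum, ← Finset.sum_sub_distrib]
    exact Finset.sum_congr rfl fun i _ => by ring
  have hKconv : Convex ℝ (interior K) := hK.2.1.interior
  by_cases hcase : c ≤ lam 1
  · -- the interesting case
    have hle1 : ∀ i : Fin n, i ≠ 0 → lam 1 ≤ lam i := by
      intro i hi
      refine hmono ?_
      have hi0 : i.val ≠ 0 := fun h => hi (Fin.ext (by simpa using h))
      rw [Fin.le_def, Fin.val_one', Nat.mod_eq_of_lt (by omega)]
      omega
    by_cases hc0 : c ≤ lam 0
    · -- c ≤ λ₁ : sublevel is the set where all coordinates with positive weight vanish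
      have hset : sublevel A K c = interior K ∩
          {x : EuclideanSpace ℝ (Fin n) |
            ∑ i ∈ Finset.univ, (lam i - c) * ⟪v i, x⟫ ^ 2
              ≤ ⟪(0 : EuclideanSpace ℝ (Fin n)), x⟫ ^ 2 ∧
            0 ≤ ⟪(0 : EuclideanSpace ℝ (Fin n)), x⟫} := by
        ext x
        simp only [sublevel, Set.mem_setOf_eq, Set.mem_inter_iff, Set.mem_sep_iff,
          inner_zero_left, le_refl, and_true]
        have := hdiff x
        constructor
        · rintro ⟨h1, h2⟩
          refine ⟨h1, ?_⟩
          rw [show ((0:ℝ)^2) = 0 by ring]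
          linarith
        · rintro ⟨h1, h2⟩
          refine ⟨h1, ?_⟩
          rw [show ((0:ℝ)^2) = 0 by ring] at h2
          linarith
      rw [hset]
      refine hKconv.inter (convex_aux v _ _ (fun i _ => ?_) _)
      have := hmono (Fin.zero_le i)
      linarith
    · -- λ₁ < c ≤ λ₂
      push_neg at hc0
      set t : ℝ := Real.sqrt (c - lam 0) with ht
      have hts : 0 < t := Real.sqrt_pos.mpr (by linarith)
      have ht2 : t ^ 2 = c - lam 0 := Real.sq_sqrt (by linarith)
      have herase : ∀ x : EuclideanSpace ℝ (Fin n),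
          ∑ i ∈ Finset.univ.erase 0, (lam i - c) * ⟪v i, x⟫ ^ 2
            = (quadForm A x - c * ‖x‖ ^ 2) + (c - lam 0) * ⟪v 0, x⟫ ^ 2 := by
        intro x
        have h0 := Finset.add_sum_erase Finset.univ
          (fun i => (lam i - c) * ⟪v i, x⟫ ^ 2) (Finset.mem_univ 0)
        have h1 := hdiff x
        nlinarith [h0, h1]
      have hLbound : ∀ x : EuclideanSpace ℝ (Fin n), quadForm A x ≤ c * ‖x‖ ^ 2 →
          Real.sqrt (∑ i ∈ Finset.univ.erase 0,
              (lam i - lam 1) / (lam 1 - lam 0) * ⟪v i, x⟫ ^ 2) ≤ |⟪v 0, x⟫| := by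
        intro x hx
        have h1 : ∑ i ∈ Finset.univ.erase 0, (lam i - c) * ⟪v i, x⟫ ^ 2
            ≤ (c - lam 0) * ⟪v 0, x⟫ ^ 2 := by
          have := herase x
          linarith
        have h2 : ∑ i ∈ Finset.univ.erase 0,
            (lam i - lam 1) / (lam 1 - lam 0) * ⟪v i, x⟫ ^ 2 ≤ ⟪v 0, x⟫ ^ 2 := by
          calc ∑ i ∈ Finset.univ.erase 0,
              (lam i - lam 1) / (lam 1 - lam 0) * ⟪v i, x⟫ ^ 2
              ≤ ∑ i ∈ Finset.univ.erase 0, ((lam i - c) * ⟪v i, x⟫ ^ 2) * (c - lam 0)⁻¹ := by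
                refine Finset.sum_le_sum fun i hi => ?_
                have hli : lam 1 ≤ lam i := hle1 i (Finset.mem_erase.mp hi).1
                have hdd : (lam i - lam 1) / (lam 1 - lam 0) ≤ (lam i - c) / (c - lam 0) := by
                  rw [div_le_div_iff₀ (by linarith) (by linarith)]
                  nlinarith [mul_nonneg (show (0:ℝ) ≤ lam i - lam 0 by linarith)
                    (show (0:ℝ) ≤ lam 1 - c by linarith)]
                have := mul_le_mul_of_nonneg_right hdd (sq_nonneg (⟪v i, x⟫ : ℝ))
                calc (lam i - lam 1) / (lam 1 - lam 0) * ⟪v i, x⟫ ^ 2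
                    ≤ (lam i - c) / (c - lam 0) * ⟪v i, x⟫ ^ 2 := this
                  _ = ((lam i - c) * ⟪v i, x⟫ ^ 2) * (c - lam 0)⁻¹ := by
                      rw [div_eq_mul_inv]; ring
            _ = (∑ i ∈ Finset.univ.erase 0, (lam i - c) * ⟪v i, x⟫ ^ 2) * (c - lam 0)⁻¹ :=
                (Finset.sum_mul _ _ _).symm
            _ ≤ ((c - lam 0) * ⟪v 0, x⟫ ^ 2) * (c - lam 0)⁻¹ := by
                exact mul_le_mul_of_nonneg_right h1 (inv_nonneg.mpr (by linarith))
            _ = ⟪v 0, x⟫ ^ 2 := by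
                rw [mul_comm (c - lam 0) _, mul_assoc, mul_inv_cancel₀ (by linarith : c - lam 0 ≠ 0), mul_one]
        calc Real.sqrt (∑ i ∈ Finset.univ.erase 0,
              (lam i - lam 1) / (lam 1 - lam 0) * ⟪v i, x⟫ ^ 2)
            ≤ Real.sqrt (⟪v 0, x⟫ ^ 2) := Real.sqrt_le_sqrt h2
          _ = |⟪v 0, x⟫| := Real.sqrt_sq_eq_abs _
      rcases hbranch with hb1 | hb2
      · -- K ∩ -L = {0} : the sublevel set lies in the positive branch
        have hset : sublevel A K c = interior K ∩
            {x : EuclideanSpace ℝ (Fin n) |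
              ∑ i ∈ Finset.univ.erase 0, (lam i - c) * ⟪v i, x⟫ ^ 2
                ≤ ⟪t • v 0, x⟫ ^ 2 ∧ 0 ≤ ⟪t • v 0, x⟫} := by
          ext x
          have hw : ⟪t • v 0, x⟫ = t * ⟪v 0, x⟫ := real_inner_smul_left _ _ _
          have hw2 : (⟪t • v 0, x⟫ : ℝ) ^ 2 = (c - lam 0) * ⟪v 0, x⟫ ^ 2 := by
            rw [hw, mul_pow, ht2]
          simp only [sublevel, Set.mem_setOf_eq, Set.mem_inter_iff, Set.mem_sep_iff]
          constructor
          · rintro ⟨hxK, hxq⟩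
            have hpos : 0 ≤ (⟪v 0, x⟫ : ℝ) := by
              by_contra hneg
              push_neg at hneg
              have hxL : x ∈ -L := by
                rw [Set.mem_neg]
                show Real.sqrt (∑ i ∈ Finset.univ.erase 0,
                    (lam i - lam 1) / (lam 1 - lam 0) * ⟪v i, -x⟫ ^ 2) ≤ ⟪v 0, -x⟫
                simp only [inner_neg_right, neg_sq]
                have h := hLbound x hxq
                rwa [abs_of_neg hneg] at h
              have hx0 : x ≠ 0 := by
                intro h
                rw [h, inner_zero_right] at hneg
                exact lt_irrefl _ hneg
              have hmem : x ∈ K ∩ -L := ⟨interior_subset hxK, hxL⟩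
              rw [hb1] at hmem
              exact hx0 hmem
            refine ⟨hxK, ?_, by rw [hw]; exact mul_nonneg hts.le hpos⟩
            rw [hw2]
            have := herase x
            linarith
          · rintro ⟨hxK, hxq, _⟩
            refine ⟨hxK, ?_⟩
            rw [hw2] at hxq
            have := herase x
            linarith
        rw [hset]
        refine hKconv.inter (convex_aux v _ _ (fun i hi => ?_) _)
        have := hle1 i (Finset.mem_erase.mp hi).1
        linarith
      · -- K ∩ L = {0} : the sublevel set lies in the negative branch
        have hset : sublevel A K c = interior K ∩
            {x : EuclideanSpace ℝ (Fin n) |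
              ∑ i ∈ Finset.univ.erase 0, (lam i - c) * ⟪v i, x⟫ ^ 2
                ≤ ⟪-(t • v 0), x⟫ ^ 2 ∧ 0 ≤ ⟪-(t • v 0), x⟫} := by
          ext x
          have hw : ⟪-(t • v 0), x⟫ = -(t * ⟪v 0, x⟫) := by
            rw [inner_neg_left, real_inner_smul_left]
          have hw2 : (⟪-(t • v 0), x⟫ : ℝ) ^ 2 = (c - lam 0) * ⟪v 0, x⟫ ^ 2 := by
            rw [hw, neg_sq, mul_pow, ht2]
          simp only [sublevel, Set.mem_setOf_eq, Set.mem_inter_iff, Set.mem_sep_iff]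
          constructor
          · rintro ⟨hxK, hxq⟩
            have hpos : (⟪v 0, x⟫ : ℝ) ≤ 0 := by
              by_contra hneg
              push_neg at hneg
              have hxL : x ∈ L := by
                show Real.sqrt (∑ i ∈ Finset.univ.erase 0,
                    (lam i - lam 1) / (lam 1 - lam 0) * ⟪v i, x⟫ ^ 2) ≤ ⟪v 0, x⟫
                have h := hLbound x hxq
                rwa [abs_of_pos hneg] at h
              have hx0 : x ≠ 0 := by
                intro h
                rw [h, inner_zero_right] at hneg
                exact lt_irrefl _ hneg
              have hmem : x ∈ K ∩ L := ⟨interior_subset hxK, hxL⟩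
              rw [hb2] at hmem
              exact hx0 hmem
            have hsg : 0 ≤ (⟪-(t • v 0), x⟫ : ℝ) := by
              rw [hw]
              nlinarith [mul_nonneg hts.le (neg_nonneg.mpr hpos)]
            refine ⟨hxK, ?_, hsg⟩
            rw [hw2]
            have := herase x
            linarith
          · rintro ⟨hxK, hxq, _⟩
            refine ⟨hxK, ?_⟩
            rw [hw2] at hxq
            have := herase x
            linarith
        rw [hset]
        refine hKconv.inter (convex_aux v _ _ (fun i hi => ?_) _)
        have := hle1 i (Finset.mem_erase.mp hi).1
        linarith
  · -- c ≥ λₙ : the sublevel set is all of int K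
    push_neg at hcase
    have hcn : lam ⟨n - 1, by omega⟩ ≤ c := by
      by_contra h
      push_neg at h
      exact hc ⟨hcase, h⟩
    have hset : sublevel A K c = interior K := by
      ext x
      simp only [sublevel, Set.mem_sep_iff]
      refine ⟨fun h => h.1, fun h => ⟨h, ?_⟩⟩
      have hb2 : quadForm A x ≤ c * ‖x‖ ^ 2 := by
        rw [hquad x, hnorm x, Finset.mul_sum]
        refine Finset.sum_le_sum fun i _ => ?_
        have hile : lam i ≤ lam ⟨n - 1, by omega⟩ := by
          refine hmono ?_
          rw [Fin.le_def]
          show i.val ≤ n - 1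
          have := i.isLt
          omega
        exact mul_le_mul_of_nonneg_right (le_trans hile hcn) (sq_nonneg _)
      exact hb2
    rw [hset]
    exact hKconv
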